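/- arXiv:1005.2551 — 3 statements merged into one kernel-verified Lean document; each statement's English description precedes it below -/
import Mathlib

section
/- If G is a finite pseudograph with connected components G₁,…,G_k, then the poset of tubings of G is isomorphic to the product of the posets of tubings of each Gᵢ with the poset of tubings of the edgeless graph on k nodes (equivalently, with the face poset of the (k−1)-simplex). -/
/-- A pseudograph: finite-or-infinite multigraph with loops allowed,
    given by an endpoint map from edges to unordered pairs of vertices. -/
structure Pseudograph (V E : Type) where
  ends : E → Sym2 V

/-- A (not necessarily well-formed) subgraph datum: a set of vertices and a set of edges. -/
structure Piece (V E : Type) where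
  verts : Set V
  edges : Set E

/-- Containment of subgraph data. -/
def Piece.Sub {V E : Type} (H K : Piece V E) : Prop :=
  H.verts ⊆ K.verts ∧ H.edges ⊆ K.edges

namespace Pseudograph

variable {V E : Type}

/-- The whole graph, as a piece. -/
def wholePiece : Piece V E := ⟨Set.univ, Set.univ⟩

/-- Adjacency using only edges of the piece `H`. -/
def adjIn (G : Pseudograph V E) (H : Piece V E) (u w : V) : Prop :=
  ∃ e ∈ H.edges, G.ends e = s(u, w)

/-- The piece `H` is connected: nonempty vertex set, all vertices joined by walks in `H`. -/
def ConnectedPiece (G : Pseudograph V E) (H : Piece V E) : Prop :=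
  H.verts.Nonempty ∧
    ∀ u ∈ H.verts, ∀ w ∈ H.verts, Relation.ReflTransGen (G.adjIn H) u w

/-- A tube: a proper connected subgraph containing at least one edge between
    every pair of its nodes whenever `G` has such an edge. -/
def IsTube (G : Pseudograph V E) (H : Piece V E) : Prop :=
  (∀ e ∈ H.edges, ∀ v, v ∈ G.ends e → v ∈ H.verts) ∧
  G.ConnectedPiece H ∧
  H ≠ wholePiece ∧
  (∀ u ∈ H.verts, ∀ w ∈ H.verts, u ≠ w → (∃ e, G.ends e = s(u, w)) →
    ∃ e ∈ H.edges, G.ends e = s(u, w))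

/-- Compatibility of tubes: one properly contains the other, or they are disjoint
    and cannot be connected by a single edge of `G`. -/
def Compatible (G : Pseudograph V E) (H K : Piece V E) : Prop :=
  (H.Sub K ∧ H ≠ K) ∨ (K.Sub H ∧ K ≠ H) ∨
  (Disjoint H.verts K.verts ∧
    ¬ ∃ e, ∃ u ∈ H.verts, ∃ w ∈ K.verts, G.ends e = s(u, w))

/-- Adjacency in the whole graph. -/
def adj (G : Pseudograph V E) (u w : V) : Prop := ∃ e, G.ends e = s(u, w)

/-- The connected component of `v`, as a piece. -/
def compPiece (G : Pseudograph V E) (v : V) : Piece V E :=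
  ⟨{u | Relation.ReflTransGen G.adj v u},
   {e | ∀ u, u ∈ G.ends e → Relation.ReflTransGen G.adj v u}⟩

/-- A tubing: a set of pairwise compatible tubes not containing all component tubes. -/
def IsTubing (G : Pseudograph V E) (𝒯 : Set (Piece V E)) : Prop :=
  (∀ H ∈ 𝒯, G.IsTube H) ∧
  (∀ H ∈ 𝒯, ∀ K ∈ 𝒯, H ≠ K → G.Compatible H K) ∧
  ¬ ∀ v : V, G.compPiece v ∈ 𝒯

/-- The poset of tubings of `G`, ordered by reverse inclusion. -/
def Tubing (G : Pseudograph V E) := {𝒯 : Set (Piece V E) // G.IsTubing 𝒯}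

instance (G : Pseudograph V E) : PartialOrder (G.Tubing) where
  le T T' := T'.1 ⊆ T.1
  le_refl T := subset_rfl
  le_trans T₁ T₂ T₃ h h' := fun x hx => h (h' hx)
  le_antisymm T₁ T₂ h h' := Subtype.ext (subset_antisymm h' h)

end Pseudograph

namespace Pseudograph

variable {V E : Type}


/-- `G` is a connected pseudograph. -/
def ConnectedGraph (G : Pseudograph V E) : Prop :=
  Nonempty V ∧ ∀ u w : V, Relation.ReflTransGen G.adj u w

/-- The edgeless graph on `k` nodes. -/
def edgeless (k : ℕ) : Pseudograph (Fin k) Empty := ⟨fun e => e.elim⟩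

/-- Disjoint union of a family of pseudographs. -/
def sigmaGraph {ι : Type} {Vc Ec : ι → Type} (Gc : ∀ i, Pseudograph (Vc i) (Ec i)) :
    Pseudograph ((i : ι) × Vc i) ((i : ι) × Ec i) :=
  ⟨fun e => ((Gc e.1).ends e.2).map fun v => ⟨e.1, v⟩⟩

section Aux

open Relation

lemma Piece.ext' {V E : Type} {H K : Piece V E} (hv : H.verts = K.verts)
    (he : H.edges = K.edges) : H = K := by
  cases H; cases K; simp_all

variable {k : ℕ} {Vc Ec : Fin k → Type} {Gc : ∀ i, Pseudograph (Vc i) (Ec i)}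

/-- The embedding of a piece of a component into the sigma graph. -/
def embP (i : Fin k) (H : Piece (Vc i) (Ec i)) :
    Piece ((j : Fin k) × Vc j) ((j : Fin k) × Ec j) :=
  ⟨Sigma.mk i '' H.verts, Sigma.mk i '' H.edges⟩

lemma ends_sigma (i : Fin k) (e : Ec i) :
    (sigmaGraph Gc).ends ⟨i, e⟩ = ((Gc i).ends e).map (Sigma.mk i) := rfl

lemma fst_of_mem_ends {e : (j : Fin k) × Ec j} {p : (j : Fin k) × Vc j}
    (hp : p ∈ (sigmaGraph Gc).ends e) : p.1 = e.1 := by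
  obtain ⟨j, e⟩ := e
  rw [ends_sigma] at hp
  obtain ⟨a, -, rfl⟩ := Sym2.mem_map.mp hp
  rfl

lemma ends_sigma_eq_iff {i : Fin k} {e : Ec i} {u w : Vc i} :
    (sigmaGraph Gc).ends ⟨i, e⟩ = s(⟨i, u⟩, ⟨i, w⟩) ↔ (Gc i).ends e = s(u, w) := by
  constructor
  · intro h
    apply Sym2.map.injective (sigma_mk_injective (i := i))
    rw [Sym2.map_pair_eq]
    exact h
  · intro h
    rw [ends_sigma, h, Sym2.map_pair_eq]

lemma sigma_edge_decomp {e : (j : Fin k) × Ec j} {i : Fin k} {u : Vc i}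
    {q : (j : Fin k) × Vc j} (h : (sigmaGraph Gc).ends e = s(⟨i, u⟩, q)) :
    ∃ (w : Vc i) (e' : Ec i), e = ⟨i, e'⟩ ∧ q = ⟨i, w⟩ ∧ (Gc i).ends e' = s(u, w) := by
  have h1 : (⟨i, u⟩ : (j : Fin k) × Vc j) ∈ (sigmaGraph Gc).ends e := by
    rw [h]; exact Sym2.mem_mk_left _ _
  have h2 : q ∈ (sigmaGraph Gc).ends e := by
    rw [h]; exact Sym2.mem_mk_right _ _
  have hi : e.1 = i := fst_of_mem_ends h1 ▸ rfl
  obtain ⟨j, e'⟩ := e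
  obtain rfl : i = j := hi.symm
  have hq : q.1 = i := fst_of_mem_ends h2
  obtain ⟨j', w⟩ := q
  obtain rfl : i = j' := hq.symm
  exact ⟨w, e', rfl, rfl, ends_sigma_eq_iff.mp h⟩

lemma adj_sigma {i : Fin k} {u : Vc i} {q : (j : Fin k) × Vc j} :
    (sigmaGraph Gc).adj ⟨i, u⟩ q ↔ ∃ w, q = ⟨i, w⟩ ∧ (Gc i).adj u w := by
  constructor
  · rintro ⟨e, he⟩
    obtain ⟨w, e', rfl, rfl, h⟩ := sigma_edge_decomp he
    exact ⟨w, rfl, e', h⟩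
  · rintro ⟨w, rfl, e', h⟩
    exact ⟨⟨i, e'⟩, ends_sigma_eq_iff.mpr h⟩

lemma adjIn_embP {i : Fin k} {H : Piece (Vc i) (Ec i)} {u : Vc i} {q : (j : Fin k) × Vc j} :
    (sigmaGraph Gc).adjIn (embP i H) ⟨i, u⟩ q ↔ ∃ w, q = ⟨i, w⟩ ∧ (Gc i).adjIn H u w := by
  constructor
  · rintro ⟨e, heH, he⟩
    obtain ⟨w, e', rfl, rfl, h⟩ := sigma_edge_decomp he
    obtain ⟨a, ha, hae⟩ := heH
    cases (sigma_mk_injective hae : a = e')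
    exact ⟨w, rfl, _, ha, h⟩
  · rintro ⟨w, rfl, e', he', h⟩
    exact ⟨⟨i, e'⟩, ⟨e', he', rfl⟩, ends_sigma_eq_iff.mpr h⟩

lemma rtg_adj_sigma {i : Fin k} {u : Vc i} {q : (j : Fin k) × Vc j} :
    ReflTransGen (sigmaGraph Gc).adj ⟨i, u⟩ q ↔
      ∃ w, q = ⟨i, w⟩ ∧ ReflTransGen (Gc i).adj u w := by
  constructor
  · intro h
    induction h with
    | refl => exact ⟨u, rfl, .refl⟩
    | tail _ hadj ih =>
        obtain ⟨w, rfl, hw⟩ := ih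
        obtain ⟨w', rfl, h'⟩ := adj_sigma.mp hadj
        exact ⟨w', rfl, hw.tail h'⟩
  · rintro ⟨w, rfl, hw⟩
    exact ReflTransGen.lift (Sigma.mk i) (fun a b hab => adj_sigma.mpr ⟨b, rfl, hab⟩) _ _ hw

lemma rtg_adjIn_embP {i : Fin k} {H : Piece (Vc i) (Ec i)} {u : Vc i}
    {q : (j : Fin k) × Vc j} :
    ReflTransGen ((sigmaGraph Gc).adjIn (embP i H)) ⟨i, u⟩ q ↔
      ∃ w, q = ⟨i, w⟩ ∧ ReflTransGen ((Gc i).adjIn H) u w := by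
  constructor
  · intro h
    induction h with
    | refl => exact ⟨u, rfl, .refl⟩
    | tail _ hadj ih =>
        obtain ⟨w, rfl, hw⟩ := ih
        obtain ⟨w', rfl, h'⟩ := adjIn_embP.mp hadj
        exact ⟨w', rfl, hw.tail h'⟩
  · rintro ⟨w, rfl, hw⟩
    exact ReflTransGen.lift (Sigma.mk i) (fun a b hab => adjIn_embP.mpr ⟨b, rfl, hab⟩) _ _ hw

lemma compPiece_conn {V E : Type} {G : Pseudograph V E} (h : G.ConnectedGraph) (v : V) :
    G.compPiece v = wholePiece := by
  apply Piece.ext'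
  · exact Set.eq_univ_of_forall fun u => h.2 v u
  · exact Set.eq_univ_of_forall fun e u _ => h.2 v u

lemma compPiece_sigma (hconn : ∀ i, (Gc i).ConnectedGraph) (i : Fin k) (x : Vc i) :
    (sigmaGraph Gc).compPiece ⟨i, x⟩ = embP i wholePiece := by
  apply Piece.ext'
  · ext p
    simp only [compPiece, embP, wholePiece, Set.mem_setOf_eq, Set.image_univ,
      Set.mem_range]
    constructor
    · intro h
      obtain ⟨w, rfl, -⟩ := rtg_adj_sigma.mp h
      exact ⟨w, rfl⟩
    · rintro ⟨w, rfl⟩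
      exact rtg_adj_sigma.mpr ⟨w, rfl, (hconn i).2 x w⟩
  · ext e
    simp only [compPiece, embP, wholePiece, Set.mem_setOf_eq, Set.image_univ,
      Set.mem_range]
    constructor
    · intro h
      have hm := Sym2.out_fst_mem ((sigmaGraph Gc).ends e)
      have hu := h _ hm
      obtain ⟨w, hw, -⟩ := rtg_adj_sigma.mp hu
      have hfst : (((sigmaGraph Gc).ends e).out.1).1 = e.1 := fst_of_mem_ends hm
      rw [hw] at hfst
      obtain ⟨j, e'⟩ := e
      have : i = j := hfst
      subst this
      exact ⟨e', rfl⟩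
    · rintro ⟨e', rfl⟩
      intro u hu
      have hu1 : u.1 = i := fst_of_mem_ends hu
      obtain ⟨j, u'⟩ := u
      obtain rfl : i = j := hu1.symm
      exact rtg_adj_sigma.mpr ⟨u', rfl, (hconn i).2 x u'⟩

lemma embP_injective (i : Fin k) :
    Function.Injective (@embP k Vc Ec i) := by
  intro H K h
  exact Piece.ext'
    ((Set.image_injective.mpr sigma_mk_injective) (congrArg Piece.verts h))
    ((Set.image_injective.mpr sigma_mk_injective) (congrArg Piece.edges h))

lemma embP_fst {i j : Fin k} {H : Piece (Vc i) (Ec i)} {K : Piece (Vc j) (Ec j)}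
    (h : embP i H = embP j K) (hne : H.verts.Nonempty) : i = j := by
  obtain ⟨x, hx⟩ := hne
  have hm : (⟨i, x⟩ : (l : Fin k) × Vc l) ∈ (embP j K).verts := by
    rw [← h]; exact ⟨x, hx, rfl⟩
  obtain ⟨y, -, hy⟩ := hm
  exact (congrArg Sigma.fst hy).symm

lemma embP_sub {i : Fin k} {H K : Piece (Vc i) (Ec i)} :
    (embP i H).Sub (embP i K) ↔ H.Sub K := by
  unfold Piece.Sub embP
  simp only [Set.image_subset_image_iff sigma_mk_injective]

lemma embP_eq_whole {i : Fin k} {H : Piece (Vc i) (Ec i)}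
    (h : embP i H = (wholePiece : Piece ((j : Fin k) × Vc j) ((j : Fin k) × Ec j))) :
    H = wholePiece := by
  have himg : ∀ {α β : Type} (f : α → β), Function.Injective f → ∀ {s : Set α},
      f '' s = Set.univ → s = Set.univ := by
    intro α β f hf s hs
    apply Set.eq_univ_of_forall
    intro x
    have : f x ∈ f '' s := hs ▸ Set.mem_univ _
    obtain ⟨y, hy, he⟩ := this
    rwa [← hf he]
  exact Piece.ext'
    (himg _ sigma_mk_injective (congrArg Piece.verts h))
    (himg _ sigma_mk_injective (congrArg Piece.edges h))

lemma exists_ne_of_embP_whole_ne {i : Fin k}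
    (h : @embP k Vc Ec i wholePiece ≠ wholePiece) : ∃ j, j ≠ i := by
  by_contra hc
  push_neg at hc
  apply h
  apply Piece.ext'
  · apply Set.eq_univ_of_forall
    rintro ⟨j, x⟩
    rcases hc j with rfl
    exact ⟨x, trivial, rfl⟩
  · apply Set.eq_univ_of_forall
    rintro ⟨j, e⟩
    rcases hc j with rfl
    exact ⟨e, trivial, rfl⟩

lemma compat_cross {i j : Fin k} (hij : i ≠ j) (H : Piece (Vc i) (Ec i))
    (K : Piece (Vc j) (Ec j)) :
    (sigmaGraph Gc).Compatible (embP i H) (embP j K) := by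
  refine Or.inr (Or.inr ⟨?_, ?_⟩)
  · rw [Set.disjoint_left]
    rintro p ⟨x, -, rfl⟩ ⟨y, -, hy⟩
    exact hij (congrArg Sigma.fst hy).symm
  · rintro ⟨e, u, ⟨x, -, rfl⟩, w, ⟨y, -, rfl⟩, he⟩
    obtain ⟨w', e', rfl, heq, -⟩ := sigma_edge_decomp he
    exact hij (congrArg Sigma.fst heq).symm

lemma compat_up {i : Fin k} {H K : Piece (Vc i) (Ec i)} (h : (Gc i).Compatible H K) :
    (sigmaGraph Gc).Compatible (embP i H) (embP i K) := by
  rcases h with ⟨hsub, hne⟩ | ⟨hsub, hne⟩ | ⟨hdisj, hedge⟩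
  · exact Or.inl ⟨embP_sub.mpr hsub, fun he => hne (embP_injective i he)⟩
  · exact Or.inr (Or.inl ⟨embP_sub.mpr hsub, fun he => hne (embP_injective i he)⟩)
  · refine Or.inr (Or.inr ⟨(Set.disjoint_image_iff sigma_mk_injective).mpr hdisj, ?_⟩)
    rintro ⟨e, u, ⟨x, hx, rfl⟩, w, ⟨y, hy, rfl⟩, he⟩
    obtain ⟨w', e', rfl, heq, he'⟩ := sigma_edge_decomp he
    have : y = w' := sigma_mk_injective heq
    subst this
    exact hedge ⟨e', x, hx, y, hy, he'⟩

lemma compat_down {i : Fin k} {H K : Piece (Vc i) (Ec i)}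
    (h : (sigmaGraph Gc).Compatible (embP i H) (embP i K)) : (Gc i).Compatible H K := by
  rcases h with ⟨hsub, hne⟩ | ⟨hsub, hne⟩ | ⟨hdisj, hedge⟩
  · exact Or.inl ⟨embP_sub.mp hsub, fun he => hne (congrArg _ he)⟩
  · exact Or.inr (Or.inl ⟨embP_sub.mp hsub, fun he => hne (congrArg _ he)⟩)
  · refine Or.inr (Or.inr ⟨(Set.disjoint_image_iff sigma_mk_injective).mp hdisj, ?_⟩)
    rintro ⟨e, u, hu, w, hw, he⟩
    exact hedge ⟨⟨i, e⟩, ⟨i, u⟩, ⟨u, hu, rfl⟩, ⟨i, w⟩, ⟨w, hw, rfl⟩,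
      ends_sigma_eq_iff.mpr he⟩

lemma isTube_embP {i : Fin k} {H : Piece (Vc i) (Ec i)}
    (hcl : ∀ e ∈ H.edges, ∀ v, v ∈ (Gc i).ends e → v ∈ H.verts)
    (hc : (Gc i).ConnectedPiece H)
    (hind : ∀ u ∈ H.verts, ∀ w ∈ H.verts, u ≠ w → (∃ e, (Gc i).ends e = s(u, w)) →
      ∃ e ∈ H.edges, (Gc i).ends e = s(u, w))
    (hproper : embP i H ≠ wholePiece) :
    (sigmaGraph Gc).IsTube (embP i H) := by
  refine ⟨?_, ⟨?_, ?_⟩, hproper, ?_⟩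
  · rintro e ⟨e', he', rfl⟩ v hv
    rw [ends_sigma] at hv
    obtain ⟨a, ha, rfl⟩ := Sym2.mem_map.mp hv
    exact ⟨a, hcl e' he' a ha, rfl⟩
  · obtain ⟨x, hx⟩ := hc.1
    exact ⟨⟨i, x⟩, x, hx, rfl⟩
  · rintro u ⟨x, hx, rfl⟩ w ⟨y, hy, rfl⟩
    exact rtg_adjIn_embP.mpr ⟨y, rfl, hc.2 x hx y hy⟩
  · rintro u ⟨x, hx, rfl⟩ w ⟨y, hy, rfl⟩ hne ⟨e, he⟩
    obtain ⟨w', e', rfl, heq, he'⟩ := sigma_edge_decomp he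
    have : y = w' := sigma_mk_injective heq
    subst this
    have hxy : x ≠ y := fun h => hne (by rw [h])
    obtain ⟨e'', he''H, he''⟩ := hind x hx y hy hxy ⟨e', he'⟩
    exact ⟨⟨i, e''⟩, ⟨e'', he''H, rfl⟩, ends_sigma_eq_iff.mpr he''⟩

lemma isTube_embP_of_tube {i : Fin k} {H : Piece (Vc i) (Ec i)}
    (h : (Gc i).IsTube H) : (sigmaGraph Gc).IsTube (embP i H) :=
  isTube_embP h.1 h.2.1 h.2.2.2 (fun hcon => h.2.2.1 (embP_eq_whole hcon))

lemma isTube_embP_whole (hconn : ∀ i, (Gc i).ConnectedGraph) {i : Fin k}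
    (hj : ∃ j, j ≠ i) : (sigmaGraph Gc).IsTube (embP i wholePiece) := by
  apply isTube_embP
  · intro e _ v _; trivial
  · refine ⟨?_, ?_⟩
    · obtain ⟨x⟩ := (hconn i).1
      exact ⟨x, trivial⟩
    · intro u _ w _
      exact ReflTransGen.mono (fun a b ⟨e, he⟩ => ⟨e, trivial, he⟩) _ _ ((hconn i).2 u w)
  · intro u _ w _ _ he
    obtain ⟨e, he⟩ := he
    exact ⟨e, trivial, he⟩
  · obtain ⟨j, hj⟩ := hj
    obtain ⟨x⟩ := (hconn j).1
    intro heq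
    have : (⟨j, x⟩ : (l : Fin k) × Vc l) ∈ (embP i (wholePiece : Piece (Vc i) (Ec i))).verts := by
      rw [heq]; trivial
    obtain ⟨y, -, hy⟩ := this
    exact hj (congrArg Sigma.fst hy).symm

lemma tube_classify {H : Piece ((j : Fin k) × Vc j) ((j : Fin k) × Ec j)}
    (hT : (sigmaGraph Gc).IsTube H) :
    ∃ i H', H = embP i H' ∧ ((Gc i).IsTube H' ∨ H' = wholePiece) := by
  obtain ⟨hcl, ⟨⟨p, hp⟩, hcon⟩, hproper, hind⟩ := hT
  obtain ⟨i, v⟩ := p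
  have hv : ∀ q ∈ H.verts, q.1 = i := by
    intro q hq
    have h1 := hcon ⟨i, v⟩ hp q hq
    have h2 : ReflTransGen (sigmaGraph Gc).adj ⟨i, v⟩ q :=
      ReflTransGen.mono (fun a b ⟨e, _, he⟩ => ⟨e, he⟩) _ _ h1
    obtain ⟨w, rfl, -⟩ := rtg_adj_sigma.mp h2
    rfl
  have he : ∀ e ∈ H.edges, e.1 = i := by
    intro e heH
    have hm := Sym2.out_fst_mem ((sigmaGraph Gc).ends e)
    have h1 := hcl e heH _ hm
    have h2 := fst_of_mem_ends hm
    rw [← h2]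
    exact hv _ h1
  set H' : Piece (Vc i) (Ec i) := ⟨{x | ⟨i, x⟩ ∈ H.verts}, {e | ⟨i, e⟩ ∈ H.edges}⟩
    with hH'def
  have heq : H = embP i H' := by
    apply Piece.ext'
    · ext q
      constructor
      · intro hq
        obtain ⟨j, x⟩ := q
        have : j = i := hv _ hq
        subst this
        exact ⟨x, hq, rfl⟩
      · rintro ⟨x, hx, rfl⟩
        exact hx
    · ext e
      constructor
      · intro heH
        obtain ⟨j, e'⟩ := e
        have : j = i := he _ heH
        subst this
        exact ⟨e', heH, rfl⟩
      · rintro ⟨e', he', rfl⟩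
        exact he'
  refine ⟨i, H', heq, ?_⟩
  by_cases hw : H' = wholePiece
  · exact Or.inr hw
  · left
    refine ⟨?_, ⟨?_, ?_⟩, hw, ?_⟩
    · intro e' he' v' hv'
      exact hcl ⟨i, e'⟩ he' ⟨i, v'⟩
        (by rw [ends_sigma]; exact Sym2.mem_map.mpr ⟨v', hv', rfl⟩)
    · exact ⟨v, hp⟩
    · intro u hu w hw'
      have h1 := hcon ⟨i, u⟩ hu ⟨i, w⟩ hw'
      rw [heq] at h1
      obtain ⟨w', hw'', h'⟩ := rtg_adjIn_embP.mp h1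
      have : w = w' := sigma_mk_injective hw''
      subst this
      exact h'
    · intro u hu w hw' hne hex
      obtain ⟨e', he'⟩ := hex
      have hGe : (sigmaGraph Gc).ends ⟨i, e'⟩ = s(⟨i, u⟩, ⟨i, w⟩) :=
        ends_sigma_eq_iff.mpr he'
      have hne' : (⟨i, u⟩ : (l : Fin k) × Vc l) ≠ ⟨i, w⟩ :=
        fun h => hne (sigma_mk_injective h)
      obtain ⟨e, heH, hee⟩ := hind ⟨i, u⟩ hu ⟨i, w⟩ hw' hne' ⟨⟨i, e'⟩, hGe⟩
      obtain ⟨w'', e'', rfl, heq2, hee'⟩ := sigma_edge_decomp hee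
      have : w = w'' := sigma_mk_injective heq2
      subst this
      exact ⟨e'', heH, hee'⟩

/-- The singleton piece in the edgeless graph. -/
def sgl (i : Fin k) : Piece (Fin k) Empty := ⟨{i}, ∅⟩

lemma piece_edgeless_ext {P Q : Piece (Fin k) Empty} (h : P.verts = Q.verts) : P = Q :=
  Piece.ext' h (by rw [Set.eq_empty_of_isEmpty P.edges, Set.eq_empty_of_isEmpty Q.edges])

lemma sgl_injective : Function.Injective (@sgl k) := by
  intro i j h
  have hv := congrArg Piece.verts h
  simpa [sgl, Set.singleton_eq_singleton_iff] using hv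

lemma rtg_edgeless_in {P : Piece (Fin k) Empty} {a b : Fin k}
    (h : ReflTransGen ((edgeless k).adjIn P) a b) : a = b := by
  induction h with
  | refl => rfl
  | tail _ hadj _ => obtain ⟨e, -, -⟩ := hadj; exact e.elim

lemma isTube_sgl {i : Fin k} (hj : ∃ j, j ≠ i) : (edgeless k).IsTube (sgl i) := by
  refine ⟨?_, ⟨⟨i, rfl⟩, ?_⟩, ?_, ?_⟩
  · rintro e - v -; exact e.elim
  · intro u hu w hw
    obtain rfl : i = u := Eq.symm hu
    obtain rfl : i = w := Eq.symm hw
    exact .refl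
  · obtain ⟨j, hj⟩ := hj
    intro h
    have : j ∈ (sgl i).verts := by rw [h]; trivial
    exact hj this
  · rintro u - w - - ⟨e, -⟩; exact e.elim

lemma tube_edgeless_shape {P : Piece (Fin k) Empty} (h : (edgeless k).IsTube P) :
    ∃ i, P = sgl i ∧ ∃ j, j ≠ i := by
  obtain ⟨-, ⟨⟨i, hi⟩, hcon⟩, hproper, -⟩ := h
  have hverts : P.verts = {i} := by
    apply Set.eq_singleton_iff_unique_mem.mpr
    exact ⟨hi, fun w hw => (rtg_edgeless_in (hcon i hi w hw)).symm⟩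
  have hP : P = sgl i := piece_edgeless_ext hverts
  subst hP
  refine ⟨i, rfl, ?_⟩
  by_contra hc
  push_neg at hc
  apply hproper
  apply piece_edgeless_ext
  apply Set.eq_univ_of_forall
  intro j
  rw [hverts]
  exact hc j

lemma compPiece_edgeless (i : Fin k) : (edgeless k).compPiece i = sgl i := by
  apply piece_edgeless_ext
  ext u
  simp only [compPiece, sgl, Set.mem_setOf_eq, Set.mem_singleton_iff]
  constructor
  · intro h
    induction h with
    | refl => rfl
    | tail _ hadj _ => obtain ⟨e, -⟩ := hadj; exact e.elim
  · rintro rfl; exact .refl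

lemma compat_sgl {i j : Fin k} (hij : i ≠ j) :
    (edgeless k).Compatible (sgl i) (sgl j) := by
  refine Or.inr (Or.inr ⟨?_, ?_⟩)
  · simpa [sgl] using Set.disjoint_singleton.mpr hij
  · rintro ⟨e, -⟩; exact e.elim

lemma fwdT_isTubing (hconn : ∀ i, (Gc i).ConnectedGraph)
    (T : (sigmaGraph Gc).Tubing) (i : Fin k) :
    (Gc i).IsTubing {H | (Gc i).IsTube H ∧ embP i H ∈ T.1} := by
  refine ⟨fun H hH => hH.1, ?_, ?_⟩
  · intro H hH K hK hne
    exact compat_down (T.2.2.1 _ hH.2 _ hK.2 (fun he => hne (embP_injective i he)))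
  · intro hall
    obtain ⟨v⟩ := (hconn i).1
    have hv := hall v
    rw [compPiece_conn (hconn i)] at hv
    exact hv.1.2.2.1 rfl

lemma fwdU_isTubing (hconn : ∀ i, (Gc i).ConnectedGraph)
    (T : (sigmaGraph Gc).Tubing) :
    (edgeless k).IsTubing {P | ∃ i, P = sgl i ∧ embP i wholePiece ∈ T.1} := by
  refine ⟨?_, ?_, ?_⟩
  · rintro P ⟨i, rfl, hmem⟩
    exact isTube_sgl (exists_ne_of_embP_whole_ne (T.2.1 _ hmem).2.2.1)
  · rintro P ⟨i, rfl, hi⟩ Q ⟨j, rfl, hj⟩ hne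
    exact compat_sgl (fun h => hne (congrArg sgl h))
  · intro hall
    apply T.2.2.2
    rintro ⟨i, x⟩
    rw [compPiece_sigma hconn]
    have hi := hall i
    rw [compPiece_edgeless] at hi
    obtain ⟨i', heq, hmem⟩ := hi
    obtain rfl := sgl_injective heq
    exact hmem

lemma bwd_isTubing (hconn : ∀ i, (Gc i).ConnectedGraph)
    (T : ∀ i, (Gc i).Tubing) (U : (edgeless k).Tubing) :
    (sigmaGraph Gc).IsTubing
      {P | ∃ i, (∃ H ∈ (T i).1, P = embP i H) ∨
        (sgl i ∈ U.1 ∧ P = embP i wholePiece)} := by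
  refine ⟨?_, ?_, ?_⟩
  · rintro P ⟨i, ⟨H, hH, rfl⟩ | ⟨hU, rfl⟩⟩
    · exact isTube_embP_of_tube ((T i).2.1 H hH)
    · obtain ⟨i', heq, j, hj⟩ := tube_edgeless_shape (U.2.1 _ hU)
      obtain rfl := sgl_injective heq
      exact isTube_embP_whole hconn ⟨j, hj⟩
  · intro P hP Q hQ hne
    obtain ⟨i, hPi⟩ := hP
    obtain ⟨j, hQj⟩ := hQ
    by_cases hij : i = j
    · subst hij
      rcases hPi with ⟨H, hH, rfl⟩ | ⟨hU, rfl⟩ <;>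
        rcases hQj with ⟨K, hK, rfl⟩ | ⟨hV, rfl⟩
      · exact compat_up ((T i).2.2.1 H hH K hK (fun h => hne (by rw [h])))
      · exact Or.inl ⟨embP_sub.mpr ⟨Set.subset_univ _, Set.subset_univ _⟩, hne⟩
      · exact Or.inr (Or.inl ⟨embP_sub.mpr ⟨Set.subset_univ _, Set.subset_univ _⟩,
          fun h => hne h.symm⟩)
      · exact absurd rfl hne
    · obtain ⟨A, rfl⟩ : ∃ A, P = embP i A := by
        rcases hPi with ⟨H, -, rfl⟩ | ⟨-, rfl⟩
        exacts [⟨H, rfl⟩, ⟨_, rfl⟩]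
      obtain ⟨B, rfl⟩ : ∃ B, Q = embP j B := by
        rcases hQj with ⟨H, -, rfl⟩ | ⟨-, rfl⟩
        exacts [⟨H, rfl⟩, ⟨_, rfl⟩]
      exact compat_cross hij A B
  · intro hall
    apply U.2.2.2
    intro i
    rw [compPiece_edgeless]
    obtain ⟨x⟩ := (hconn i).1
    have hx := hall ⟨i, x⟩
    rw [compPiece_sigma hconn] at hx
    have hnon : (wholePiece : Piece (Vc i) (Ec i)).verts.Nonempty := ⟨x, trivial⟩
    obtain ⟨i', ⟨H, hH, heq⟩ | ⟨hU, heq⟩⟩ := hx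
    · obtain rfl := embP_fst heq hnon
      obtain rfl := embP_injective i heq
      exact absurd rfl ((T i).2.1 _ hH).2.2.1
    · obtain rfl := embP_fst heq hnon
      exact hU

variable (Gc) in
/-- Forward map of the tubing isomorphism. -/
def fwdFun (hconn : ∀ i, (Gc i).ConnectedGraph) (T : (sigmaGraph Gc).Tubing) :
    (∀ i, (Gc i).Tubing) × (edgeless k).Tubing :=
  (fun i => ⟨{H | (Gc i).IsTube H ∧ embP i H ∈ T.1}, fwdT_isTubing hconn T i⟩,
   ⟨{P | ∃ i, P = sgl i ∧ embP i wholePiece ∈ T.1}, fwdU_isTubing hconn T⟩)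

variable (Gc) in
/-- Backward map of the tubing isomorphism. -/
def bwdFun (hconn : ∀ i, (Gc i).ConnectedGraph)
    (TU : (∀ i, (Gc i).Tubing) × (edgeless k).Tubing) : (sigmaGraph Gc).Tubing :=
  ⟨{P | ∃ i, (∃ H ∈ (TU.1 i).1, P = embP i H) ∨
      (sgl i ∈ TU.2.1 ∧ P = embP i wholePiece)},
   bwd_isTubing hconn TU.1 TU.2⟩

lemma bwd_fwd (hconn : ∀ i, (Gc i).ConnectedGraph) (T : (sigmaGraph Gc).Tubing) :
    bwdFun Gc hconn (fwdFun Gc hconn T) = T := by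
  apply Subtype.ext
  ext P
  constructor
  · rintro ⟨i, ⟨H, ⟨-, hmem⟩, rfl⟩ | ⟨⟨i', heq, hmem⟩, rfl⟩⟩
    · exact hmem
    · obtain rfl := sgl_injective heq
      exact hmem
  · intro hP
    obtain ⟨i, H', rfl, hc⟩ := tube_classify (T.2.1 P hP)
    rcases hc with h | rfl
    · exact ⟨i, Or.inl ⟨H', ⟨h, hP⟩, rfl⟩⟩
    · exact ⟨i, Or.inr ⟨⟨i, rfl, hP⟩, rfl⟩⟩

lemma fwd_bwd (hconn : ∀ i, (Gc i).ConnectedGraph)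
    (TU : (∀ i, (Gc i).Tubing) × (edgeless k).Tubing) :
    fwdFun Gc hconn (bwdFun Gc hconn TU) = TU := by
  obtain ⟨T, U⟩ := TU
  have h1 : (fwdFun Gc hconn (bwdFun Gc hconn (T, U))).1 = T := by
    funext i
    apply Subtype.ext
    ext H
    constructor
    · rintro ⟨htube, i', ⟨K, hK, heq⟩ | ⟨hU, heq⟩⟩
      · obtain rfl := embP_fst heq htube.2.1.1
        obtain rfl := embP_injective i heq
        exact hK
      · obtain rfl := embP_fst heq htube.2.1.1
        exact absurd (embP_injective i heq) htube.2.2.1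
    · intro hH
      exact ⟨(T i).2.1 H hH, ⟨i, Or.inl ⟨H, hH, rfl⟩⟩⟩
  have h2 : (fwdFun Gc hconn (bwdFun Gc hconn (T, U))).2 = U := by
    apply Subtype.ext
    ext P
    constructor
    · rintro ⟨i, rfl, i', ⟨K, hK, heq⟩ | ⟨hU, heq⟩⟩
      · obtain ⟨x⟩ := (hconn i).1
        obtain rfl := embP_fst heq ⟨x, trivial⟩
        obtain rfl := (embP_injective i heq).symm
        exact absurd rfl ((T i).2.1 _ hK).2.2.1
      · obtain ⟨x⟩ := (hconn i).1
        obtain rfl := embP_fst heq ⟨x, trivial⟩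
        exact hU
    · intro hP
      obtain ⟨i, rfl, -⟩ := tube_edgeless_shape (U.2.1 P hP)
      exact ⟨i, rfl, ⟨i, Or.inr ⟨hP, rfl⟩⟩⟩
  exact Prod.ext h1 h2

end Aux

/-- If `G` is a pseudograph with connected components `G₁, …, G_k`, then the poset of
tubings of `G` is isomorphic to the product of the posets of tubings of the `Gᵢ`
with the poset of tubings of the edgeless graph on `k` nodes. -/
theorem tubing_poset_of_disconnected {k : ℕ} {Vc Ec : Fin k → Type}
    (Gc : ∀ i, Pseudograph (Vc i) (Ec i))
    (hconn : ∀ i, (Gc i).ConnectedGraph) :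
    Nonempty ((sigmaGraph Gc).Tubing ≃o
      ((∀ i, (Gc i).Tubing) × (edgeless k).Tubing)) := by
  refine ⟨Equiv.toOrderIso
    ⟨fwdFun Gc hconn, bwdFun Gc hconn, bwd_fwd hconn, fwd_bwd hconn⟩ ?_ ?_⟩
  · intro T T' h
    refine ⟨fun i => ?_, ?_⟩
    · intro H hH
      exact ⟨hH.1, h hH.2⟩
    · rintro P ⟨i, rfl, hm⟩
      exact ⟨i, rfl, h hm⟩
  · rintro ⟨T, U⟩ ⟨T', U'⟩ ⟨h1, h2⟩
    rintro P ⟨i, ⟨H, hH, rfl⟩ | ⟨hU, rfl⟩⟩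
    · exact ⟨i, Or.inl ⟨H, h1 i hH, rfl⟩⟩
    · exact ⟨i, Or.inr ⟨h2 hU, rfl⟩⟩

end Pseudograph
end

section
/- Let G be the pseudograph with two nodes and n ≥ 1 parallel edges between them. Then the poset of tubings of G is isomorphic to the product of the poset of tubings of the complete simple graph Γ_n on n nodes with the poset of tubings of the complete graph Γ_2 on two nodes. -/
namespace Pseudograph

variable {V E : Type}


/-- The pseudograph with two nodes and `n` parallel edges between them. -/
def banana (n : ℕ) : Pseudograph Bool (Fin n) := ⟨fun _ => s(false, true)⟩

/-- The complete simple graph on `n` nodes. -/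
def complete (n : ℕ) : Pseudograph (Fin n) {p : Sym2 (Fin n) // ¬ p.IsDiag} :=
  ⟨fun e => e.1⟩

/-- Edge type of the complete graph. -/
abbrev CE (m : ℕ) := {p : Sym2 (Fin m) // ¬ p.IsDiag}

lemma piece_ext {H K : Piece V E} (hv : H.verts = K.verts) (he : H.edges = K.edges) :
    H = K := by cases H; cases K; simp_all

/-- induced edges -/
def ind {m : ℕ} (S : Set (Fin m)) : Set (CE m) := {e | ∀ v ∈ e.1, v ∈ S}

lemma complete_tube_iff {m : ℕ} (K : Piece (Fin m) (CE m)) :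
    (complete m).IsTube K ↔
      K.verts.Nonempty ∧ K.verts ≠ Set.univ ∧ K.edges = ind K.verts := by
  constructor
  · rintro ⟨hend, ⟨hne, hconn⟩, hwh, hfill⟩
    have hed : K.edges = ind K.verts := by
      apply subset_antisymm
      · intro e he v hv
        exact hend e he v hv
      · rintro e he
        obtain ⟨q, huw⟩ := e.1.exists_rep
        obtain ⟨u, w⟩ := q
        have hprev : ¬ (e.1).IsDiag := e.2
        have hune : u ≠ w := by
          intro h; apply hprev; rw [← huw, h]; exact Sym2.mk_isDiag_iff.mpr rfl
        have hu : u ∈ K.verts := he u (by rw [← huw]; exact Sym2.mem_mk_left u w)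
        have hw : w ∈ K.verts := he w (by rw [← huw]; exact Sym2.mem_mk_right u w)
        obtain ⟨e', he', hee'⟩ := hfill u hu w hw hune ⟨e, huw.symm⟩
        have : e' = e := Subtype.ext (by simpa [complete] using hee'.trans huw)
        rwa [← this]
    refine ⟨hne, ?_, hed⟩
    intro huniv
    apply hwh
    apply piece_ext huniv
    rw [hed, huniv]
    ext e; simp [ind, wholePiece]
  · rintro ⟨hne, hnu, hed⟩
    have hstep : ∀ u ∈ K.verts, ∀ w ∈ K.verts, u ≠ w →
        ∃ e ∈ K.edges, (complete m).ends e = s(u, w) := by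
      intro u hu w hw huw
      refine ⟨⟨s(u, w), by simp [Sym2.isDiag_iff_proj_eq, huw]⟩, ?_, rfl⟩
      rw [hed]
      intro v hv
      simp only [Sym2.mem_iff] at hv
      rcases hv with rfl | rfl <;> assumption
    refine ⟨?_, ⟨hne, ?_⟩, ?_, ?_⟩
    · intro e he v hv
      rw [hed] at he; exact he v hv
    · intro u hu w hw
      rcases eq_or_ne u w with h | h
      · exact h ▸ Relation.ReflTransGen.refl
      · obtain ⟨e, he, hee⟩ := hstep u hu w hw h
        exact Relation.ReflTransGen.single ⟨e, he, hee⟩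
    · intro h; apply hnu; rw [h]; rfl
    · intro u hu w hw huw _
      exact hstep u hu w hw huw

lemma banana_tube_iff {n : ℕ} (hn : 1 ≤ n) (H : Piece Bool (Fin n)) :
    (banana n).IsTube H ↔
      ((∃ b, H = ⟨{b}, ∅⟩) ∨
        (H.verts = Set.univ ∧ H.edges.Nonempty ∧ H.edges ≠ Set.univ)) := by
  constructor
  · rintro ⟨hend, ⟨hvne, hconn⟩, hwh, hfill⟩
    rcases eq_or_ne H.verts Set.univ with huniv | huniv
    · right
      refine ⟨huniv, ?_, ?_⟩
      · obtain ⟨e, he, -⟩ := hfill false (by rw [huniv]; trivial) true (by rw [huniv]; trivial)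
          (by simp) ⟨⟨0, hn⟩, rfl⟩
        exact ⟨e, he⟩
      · intro h; exact hwh (piece_ext huniv h)
    · left
      have hed : H.edges = ∅ := by
        ext e
        simp only [Set.mem_empty_iff_false, iff_false]
        intro he
        apply huniv
        have hf : false ∈ H.verts := hend e he false (Sym2.mem_mk_left _ _)
        have ht : true ∈ H.verts := hend e he true (Sym2.mem_mk_right _ _)
        ext b; cases b <;> simp [hf, ht]
      obtain ⟨b, hb⟩ := hvne
      refine ⟨b, piece_ext ?_ hed⟩
      ext c
      simp only [Set.mem_singleton_iff]
      constructor
      · intro hc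
        by_contra hbc
        apply huniv
        ext d; cases b <;> cases c <;> simp_all <;> tauto
      · rintro rfl; exact hb
  · rintro (⟨b, rfl⟩ | ⟨huniv, ⟨e₀, he₀⟩, hnu⟩)
    · refine ⟨?_, ⟨⟨b, rfl⟩, ?_⟩, ?_, ?_⟩
      · intro e he; exact absurd he (Set.notMem_empty e)
      · rintro u rfl w rfl; exact Relation.ReflTransGen.refl
      · intro h
        have : (!b) ∈ ({b} : Set Bool) := by
          have : (!b) ∈ (wholePiece : Piece Bool (Fin n)).verts := trivial
          rw [← h] at this; exact this
        simp at this
      · rintro u rfl w rfl h; exact absurd rfl h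
    · have hstep : ∀ u w : Bool, u ≠ w → ∃ e ∈ H.edges, (banana n).ends e = s(u, w) := by
        intro u w huw
        refine ⟨e₀, he₀, ?_⟩
        cases u <;> cases w <;> simp_all [banana, Sym2.eq_swap]
      refine ⟨?_, ⟨⟨false, by rw [huniv]; trivial⟩, ?_⟩, ?_, ?_⟩
      · intro e he v hv; rw [huniv]; trivial
      · intro u hu w hw
        rcases eq_or_ne u w with h | h
        · exact h ▸ Relation.ReflTransGen.refl
        · obtain ⟨e, he, hee⟩ := hstep u w h
          exact Relation.ReflTransGen.single ⟨e, he, hee⟩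
      · intro h; apply hnu; rw [h]; rfl
      · intro u hu w hw huw _; exact hstep u w huw

lemma ind_mono {m : ℕ} {S S' : Set (Fin m)} (h : S ⊆ S') : ind S ⊆ ind S' :=
  fun e he v hv => h (he v hv)

lemma ind_singleton {m : ℕ} (v : Fin m) : ind ({v} : Set (Fin m)) = (∅ : Set (CE m)) := by
  ext e
  simp only [Set.mem_empty_iff_false, iff_false, ind, Set.mem_setOf_eq, Set.mem_singleton_iff]
  intro h
  obtain ⟨q, hq⟩ := e.1.exists_rep
  obtain ⟨a, b⟩ := q
  have ha := h a (by rw [← hq]; exact Sym2.mem_mk_left a b)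
  have hb := h b (by rw [← hq]; exact Sym2.mem_mk_right a b)
  exact e.2 (by rw [← hq, ha, hb]; exact Sym2.mk_isDiag_iff.mpr rfl)

lemma singleton_fin2_ne_univ (v : Fin 2) : ({v} : Set (Fin 2)) ≠ Set.univ := by
  intro h
  have h0 : (0 : Fin 2) ∈ ({v} : Set (Fin 2)) := h ▸ trivial
  have h1 : (1 : Fin 2) ∈ ({v} : Set (Fin 2)) := h ▸ trivial
  simp only [Set.mem_singleton_iff] at h0 h1
  exact absurd (h0.trans h1.symm) (by decide)

lemma fin2_tri : ∀ x w v : Fin 2, w ≠ v → (x = w ∨ x = v) := by decide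

lemma complete2_tube_iff (K : Piece (Fin 2) (CE 2)) :
    (complete 2).IsTube K ↔ ∃ v, K = ⟨{v}, ∅⟩ := by
  rw [complete_tube_iff]
  constructor
  · rintro ⟨⟨v, hv⟩, hnu, hed⟩
    have hv' : K.verts = {v} := by
      ext w
      simp only [Set.mem_singleton_iff]
      constructor
      · intro hw
        by_contra hwv
        apply hnu
        ext x
        simp only [Set.mem_univ, iff_true]
        rcases fin2_tri x w v hwv with rfl | rfl <;> assumption
      · rintro rfl; exact hv
    exact ⟨v, piece_ext hv' (by rw [hed, hv', ind_singleton])⟩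
  · rintro ⟨v, rfl⟩
    refine ⟨⟨v, rfl⟩, ?_, (ind_singleton v).symm⟩
    exact singleton_fin2_ne_univ v

lemma compPiece_complete_verts {m : ℕ} (v : Fin m) :
    ((complete m).compPiece v).verts = Set.univ := by
  ext u
  simp only [compPiece, Set.mem_setOf_eq, Set.mem_univ, iff_true]
  rcases eq_or_ne v u with rfl | h
  · exact .refl
  · exact .single ⟨⟨s(v, u), by simp [Sym2.isDiag_iff_proj_eq, h]⟩, rfl⟩

lemma compPiece_banana {n : ℕ} (hn : 1 ≤ n) :
    (banana n).compPiece false = wholePiece := by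
  have hreach : ∀ u : Bool, Relation.ReflTransGen (banana n).adj false u := by
    intro u
    cases u
    · exact .refl
    · exact .single ⟨⟨0, hn⟩, rfl⟩
  apply piece_ext
  · ext u
    simp only [compPiece, Set.mem_setOf_eq, wholePiece, Set.mem_univ, iff_true]
    exact hreach u
  · ext e
    simp only [compPiece, Set.mem_setOf_eq, wholePiece, Set.mem_univ, iff_true]
    intro u _
    exact hreach u

/-- boolean to Fin 2 -/
def bmap : Bool → Fin 2 := fun b => if b then 1 else 0

lemma bmap_inj : Function.Injective bmap := by decide

def binv : Fin 2 → Bool := fun v => v = 1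

lemma bmap_preimage_singleton (v : Fin 2) : bmap ⁻¹' {v} = {binv v} := by
  ext b
  simp only [Set.mem_preimage, Set.mem_singleton_iff]
  revert v
  cases b <;> decide

def toCompN {n : ℕ} (S : Set (Fin n)) : Piece (Fin n) (CE n) := ⟨S, ind S⟩

def toComp2 (W : Set Bool) : Piece (Fin 2) (CE 2) := ⟨bmap '' W, ∅⟩

def bigOf {n : ℕ} (K : Piece (Fin n) (CE n)) : Piece Bool (Fin n) := ⟨Set.univ, K.verts⟩

def smallOf {n : ℕ} (K : Piece (Fin 2) (CE 2)) : Piece Bool (Fin n) := ⟨bmap ⁻¹' K.verts, ∅⟩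

def Fmap1 {n : ℕ} (𝒯 : Set (Piece Bool (Fin n))) : Set (Piece (Fin n) (CE n)) :=
  {K | ∃ H ∈ 𝒯, H.verts = Set.univ ∧ K = toCompN H.edges}

def Fmap2 {n : ℕ} (𝒯 : Set (Piece Bool (Fin n))) : Set (Piece (Fin 2) (CE 2)) :=
  {K | ∃ H ∈ 𝒯, H.verts ≠ Set.univ ∧ K = toComp2 H.verts}

def Gmap {n : ℕ} (𝒜 : Set (Piece (Fin n) (CE n))) (ℬ : Set (Piece (Fin 2) (CE 2))) :
    Set (Piece Bool (Fin n)) :=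
  {H | ∃ K ∈ 𝒜, H = bigOf K} ∪ {H | ∃ K ∈ ℬ, H = smallOf K}

lemma singleton_bool_ne_univ (b : Bool) : ({b} : Set Bool) ≠ Set.univ := by
  intro h
  have : (!b) ∈ ({b} : Set Bool) := h ▸ trivial
  simp at this


lemma disjoint_univ_bool : ¬ Disjoint (Set.univ : Set Bool) Set.univ := by
  intro h
  exact (Set.disjoint_iff.mp h (by exact ⟨trivial, trivial⟩ : false ∈ Set.univ ∩ Set.univ))

lemma isTubing_F1 {n : ℕ} (hn : 1 ≤ n) {𝒯 : Set (Piece Bool (Fin n))}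
    (h𝒯 : (banana n).IsTubing 𝒯) : (complete n).IsTubing (Fmap1 𝒯) := by
  obtain ⟨htube, hcomp, -⟩ := h𝒯
  have hbig : ∀ H ∈ 𝒯, H.verts = Set.univ →
      H.edges.Nonempty ∧ H.edges ≠ Set.univ := by
    intro H hH hv
    rcases (banana_tube_iff hn H).mp (htube H hH) with ⟨b, rfl⟩ | ⟨_, h1, h2⟩
    · exact absurd hv (singleton_bool_ne_univ b)
    · exact ⟨h1, h2⟩
  refine ⟨?_, ?_, ?_⟩
  · rintro K ⟨H, hH, hv, rfl⟩
    obtain ⟨h1, h2⟩ := hbig H hH hv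
    exact (complete_tube_iff _).mpr ⟨h1, h2, rfl⟩
  · rintro K ⟨H, hH, hv, rfl⟩ K' ⟨H', hH', hv', rfl⟩ hne
    have hHne : H ≠ H' := by rintro rfl; exact hne rfl
    rcases hcomp H hH H' hH' hHne with ⟨⟨-, he⟩, -⟩ | ⟨⟨-, he⟩, -⟩ | ⟨hd, -⟩
    · exact Or.inl ⟨⟨he, ind_mono he⟩, hne⟩
    · exact Or.inr (Or.inl ⟨⟨he, ind_mono he⟩, fun h => hne h.symm⟩)
    · rw [hv, hv'] at hd
      exact absurd hd disjoint_univ_bool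
  · intro hall
    obtain ⟨H, hH, hv, hK⟩ := hall ⟨0, hn⟩
    have h1 : ((complete n).compPiece ⟨0, hn⟩).verts = Set.univ :=
      compPiece_complete_verts _
    rw [hK] at h1
    exact (hbig H hH hv).2 h1

lemma isTubing_F2 {n : ℕ} (hn : 1 ≤ n) {𝒯 : Set (Piece Bool (Fin n))}
    (h𝒯 : (banana n).IsTubing 𝒯) : (complete 2).IsTubing (Fmap2 𝒯) := by
  obtain ⟨htube, hcomp, -⟩ := h𝒯
  have hsmall : ∀ H ∈ 𝒯, H.verts ≠ Set.univ → ∃ b, H = ⟨{b}, ∅⟩ := by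
    intro H hH hv
    rcases (banana_tube_iff hn H).mp (htube H hH) with h | ⟨h1, -⟩
    · exact h
    · exact absurd h1 hv
  refine ⟨?_, ?_, ?_⟩
  · rintro K ⟨H, hH, hv, rfl⟩
    obtain ⟨b, rfl⟩ := hsmall H hH hv
    refine (complete2_tube_iff _).mpr ⟨bmap b, piece_ext ?_ rfl⟩
    show bmap '' {b} = {bmap b}
    exact Set.image_singleton
  · rintro K ⟨H, hH, hv, rfl⟩ K' ⟨H', hH', hv', rfl⟩ hne
    exfalso
    have hHne : H ≠ H' := by rintro rfl; exact hne rfl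
    obtain ⟨b, rfl⟩ := hsmall H hH hv
    obtain ⟨b', rfl⟩ := hsmall H' hH' hv'
    have hbb : b ≠ b' := by rintro rfl; exact hHne rfl
    rcases hcomp _ hH _ hH' hHne with ⟨⟨hs, -⟩, -⟩ | ⟨⟨hs, -⟩, -⟩ | ⟨-, hnoe⟩
    · exact hbb (Set.singleton_subset_singleton.mp hs)
    · exact hbb (Set.singleton_subset_singleton.mp hs).symm
    · apply hnoe
      refine ⟨⟨0, hn⟩, b, rfl, b', rfl, ?_⟩
      show s(false, true) = s(b, b')
      cases b <;> cases b' <;> simp_all [Sym2.eq_swap]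
  · intro hall
    obtain ⟨H, hH, hv, hK⟩ := hall 0
    obtain ⟨b, rfl⟩ := hsmall H hH hv
    have h1 : ((complete 2).compPiece 0).verts = Set.univ := compPiece_complete_verts _
    rw [hK] at h1
    have : bmap '' {b} = Set.univ := h1
    rw [Set.image_singleton] at this
    exact singleton_fin2_ne_univ _ this

lemma isTubing_G {n : ℕ} (hn : 1 ≤ n) {𝒜 : Set (Piece (Fin n) (CE n))}
    {ℬ : Set (Piece (Fin 2) (CE 2))}
    (h𝒜 : (complete n).IsTubing 𝒜) (hℬ : (complete 2).IsTubing ℬ) :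
    (banana n).IsTubing (Gmap 𝒜 ℬ) := by
  obtain ⟨hAtube, hAcomp, -⟩ := h𝒜
  obtain ⟨hBtube, hBcomp, -⟩ := hℬ
  have hA : ∀ K ∈ 𝒜, K.verts.Nonempty ∧ K.verts ≠ Set.univ ∧ K.edges = ind K.verts :=
    fun K hK => (complete_tube_iff K).mp (hAtube K hK)
  have hB : ∀ K ∈ ℬ, ∃ v, K = ⟨{v}, ∅⟩ :=
    fun K hK => (complete2_tube_iff K).mp (hBtube K hK)
  have hBuniq : ∀ K ∈ ℬ, ∀ K' ∈ ℬ, K = K' := by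
    intro K hK K' hK'
    by_contra hne
    obtain ⟨v, rfl⟩ := hB K hK
    obtain ⟨v', rfl⟩ := hB K' hK'
    have hvv : v ≠ v' := by rintro rfl; exact hne rfl
    rcases hBcomp _ hK _ hK' hne with ⟨⟨hs, -⟩, -⟩ | ⟨⟨hs, -⟩, -⟩ | ⟨-, hnoe⟩
    · exact hvv (Set.singleton_subset_singleton.mp hs)
    · exact hvv (Set.singleton_subset_singleton.mp hs).symm
    · exact hnoe ⟨⟨s(v, v'), by simp [Sym2.isDiag_iff_proj_eq, hvv]⟩, v, rfl, v', rfl, rfl⟩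
  have hsmalltube : ∀ K ∈ ℬ, (banana n).IsTube (smallOf K) := by
    intro K hK
    obtain ⟨v, rfl⟩ := hB K hK
    refine (banana_tube_iff hn _).mpr (Or.inl ⟨binv v, ?_⟩)
    exact piece_ext (bmap_preimage_singleton v) rfl
  refine ⟨?_, ?_, ?_⟩
  · rintro H (⟨K, hK, rfl⟩ | ⟨K, hK, rfl⟩)
    · obtain ⟨h1, h2, -⟩ := hA K hK
      exact (banana_tube_iff hn _).mpr (Or.inr ⟨rfl, h1, h2⟩)
    · exact hsmalltube K hK
  · rintro H (⟨K, hK, rfl⟩ | ⟨K, hK, rfl⟩) H' (⟨K', hK', rfl⟩ | ⟨K', hK', rfl⟩) hne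
    · -- big big
      have hKne : K ≠ K' := by rintro rfl; exact hne rfl
      rcases hAcomp K hK K' hK' hKne with ⟨⟨hv, -⟩, -⟩ | ⟨⟨hv, -⟩, -⟩ | ⟨hd, hnoe⟩
      · exact Or.inl ⟨⟨subset_rfl, hv⟩, hne⟩
      · exact Or.inr (Or.inl ⟨⟨subset_rfl, hv⟩, fun h => hne h.symm⟩)
      · exfalso
        obtain ⟨u, hu⟩ := (hA K hK).1
        obtain ⟨w, hw⟩ := (hA K' hK').1
        have huw : u ≠ w := by
          rintro rfl
          exact Set.disjoint_iff.mp hd ⟨hu, hw⟩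
        exact hnoe ⟨⟨s(u, w), by simp [Sym2.isDiag_iff_proj_eq, huw]⟩, u, hu, w, hw, rfl⟩
    · -- big small
      refine Or.inr (Or.inl ⟨⟨fun x _ => trivial, fun x hx => absurd hx (Set.notMem_empty x)⟩,
        fun h => hne h.symm⟩)
    · -- small big
      exact Or.inl ⟨⟨fun x _ => trivial, fun x hx => absurd hx (Set.notMem_empty x)⟩, hne⟩
    · -- small small
      exact absurd (hBuniq K hK K' hK' ▸ rfl) hne
  · intro hall
    have hwh := hall false
    rw [compPiece_banana hn] at hwh
    rcases hwh with ⟨K, hK, hKe⟩ | ⟨K, hK, hKe⟩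
    · have : (Set.univ : Set (Fin n)) = K.verts := congrArg Piece.edges hKe
      exact (hA K hK).2.1 this.symm
    · obtain ⟨v, rfl⟩ := hB K hK
      have : (Set.univ : Set Bool) = bmap ⁻¹' {v} := congrArg Piece.verts hKe
      rw [bmap_preimage_singleton] at this
      exact singleton_bool_ne_univ _ this.symm

lemma bmap_binv : ∀ v : Fin 2, bmap (binv v) = v := by decide

lemma GF {n : ℕ} (hn : 1 ≤ n) {𝒯 : Set (Piece Bool (Fin n))}
    (h𝒯 : (banana n).IsTubing 𝒯) : Gmap (Fmap1 𝒯) (Fmap2 𝒯) = 𝒯 := by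
  obtain ⟨htube, -, -⟩ := h𝒯
  ext H
  constructor
  · rintro (⟨K, ⟨H₀, hH₀, hv₀, rfl⟩, rfl⟩ | ⟨K, ⟨H₀, hH₀, hv₀, rfl⟩, rfl⟩)
    · have : bigOf (toCompN H₀.edges) = H₀ := piece_ext hv₀.symm rfl
      rwa [this]
    · obtain ⟨b, rfl⟩ | ⟨h1, -⟩ := (banana_tube_iff hn H₀).mp (htube H₀ hH₀)
      · have : smallOf (toComp2 (⟨{b}, ∅⟩ : Piece Bool (Fin n)).verts)
            = (⟨{b}, ∅⟩ : Piece Bool (Fin n)) := by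
          refine piece_ext ?_ rfl
          show bmap ⁻¹' (bmap '' {b}) = {b}
          exact Set.preimage_image_eq _ bmap_inj
        rwa [this]
      · exact absurd h1 hv₀
  · intro hH
    rcases (banana_tube_iff hn H).mp (htube H hH) with ⟨b, rfl⟩ | ⟨h1, -, -⟩
    · refine Or.inr ⟨toComp2 {b}, ⟨⟨{b}, ∅⟩, hH, singleton_bool_ne_univ b, rfl⟩, ?_⟩
      have : smallOf (toComp2 ({b} : Set Bool)) = (⟨{b}, ∅⟩ : Piece Bool (Fin n)) := by
        refine piece_ext ?_ rfl
        show bmap ⁻¹' (bmap '' {b}) = {b}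
        exact Set.preimage_image_eq _ bmap_inj
      exact this.symm
    · refine Or.inl ⟨toCompN H.edges, ⟨H, hH, h1, rfl⟩, ?_⟩
      have : bigOf (toCompN H.edges) = H := piece_ext h1.symm rfl
      exact this.symm

lemma FG1 {n : ℕ} (hn : 1 ≤ n) {𝒜 : Set (Piece (Fin n) (CE n))}
    {ℬ : Set (Piece (Fin 2) (CE 2))}
    (h𝒜 : (complete n).IsTubing 𝒜) (hℬ : (complete 2).IsTubing ℬ) :
    Fmap1 (Gmap 𝒜 ℬ) = 𝒜 := by
  ext K
  constructor
  · rintro ⟨H, (⟨K₀, hK₀, rfl⟩ | ⟨K₀, hK₀, rfl⟩), hv, rfl⟩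
    · have hed := ((complete_tube_iff K₀).mp (h𝒜.1 K₀ hK₀)).2.2
      have : toCompN (bigOf K₀).edges = K₀ := piece_ext rfl hed.symm
      rwa [this]
    · exfalso
      obtain ⟨v, rfl⟩ := (complete2_tube_iff K₀).mp (hℬ.1 K₀ hK₀)
      have : ({binv v} : Set Bool) = Set.univ := by
        rw [← bmap_preimage_singleton]; exact hv
      exact singleton_bool_ne_univ _ this
  · intro hK
    have hed := ((complete_tube_iff K).mp (h𝒜.1 K hK)).2.2
    exact ⟨bigOf K, Or.inl ⟨K, hK, rfl⟩, rfl, piece_ext rfl hed⟩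

lemma FG2 {n : ℕ} (hn : 1 ≤ n) {𝒜 : Set (Piece (Fin n) (CE n))}
    {ℬ : Set (Piece (Fin 2) (CE 2))}
    (h𝒜 : (complete n).IsTubing 𝒜) (hℬ : (complete 2).IsTubing ℬ) :
    Fmap2 (Gmap 𝒜 ℬ) = ℬ := by
  have key : ∀ K₀ ∈ ℬ, toComp2 (@smallOf n K₀).verts = K₀ := by
    intro K₀ hK₀
    obtain ⟨v, rfl⟩ := (complete2_tube_iff K₀).mp (hℬ.1 K₀ hK₀)
    refine piece_ext ?_ rfl
    show bmap '' (bmap ⁻¹' {v}) = {v}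
    rw [bmap_preimage_singleton, Set.image_singleton, bmap_binv]
  ext K
  constructor
  · rintro ⟨H, (⟨K₀, hK₀, rfl⟩ | ⟨K₀, hK₀, rfl⟩), hv, rfl⟩
    · exact absurd rfl hv
    · rw [key K₀ hK₀]; exact hK₀
  · intro hK
    refine ⟨smallOf K, Or.inr ⟨K, hK, rfl⟩, ?_, (key K hK).symm⟩
    obtain ⟨v, rfl⟩ := (complete2_tube_iff K).mp (hℬ.1 K hK)
    show bmap ⁻¹' {v} ≠ Set.univ
    rw [bmap_preimage_singleton]
    exact singleton_bool_ne_univ _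

lemma Gmap_mono {n : ℕ} {𝒜 𝒜' : Set (Piece (Fin n) (CE n))}
    {ℬ ℬ' : Set (Piece (Fin 2) (CE 2))} (hA : 𝒜 ⊆ 𝒜') (hB : ℬ ⊆ ℬ') :
    Gmap 𝒜 ℬ ⊆ Gmap 𝒜' ℬ' := by
  rintro H (⟨K, hK, rfl⟩ | ⟨K, hK, rfl⟩)
  · exact Or.inl ⟨K, hA hK, rfl⟩
  · exact Or.inr ⟨K, hB hK, rfl⟩

lemma Fmap1_mono {n : ℕ} {𝒯 𝒯' : Set (Piece Bool (Fin n))} (h : 𝒯 ⊆ 𝒯') :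
    Fmap1 𝒯 ⊆ Fmap1 𝒯' := by
  rintro K ⟨H, hH, hv, rfl⟩; exact ⟨H, h hH, hv, rfl⟩

lemma Fmap2_mono {n : ℕ} {𝒯 𝒯' : Set (Piece Bool (Fin n))} (h : 𝒯 ⊆ 𝒯') :
    Fmap2 𝒯 ⊆ Fmap2 𝒯' := by
  rintro K ⟨H, hH, hv, rfl⟩; exact ⟨H, h hH, hv, rfl⟩

/-- The poset of tubings of the two-node `n`-banana is isomorphic to the product of the
posets of tubings of the complete graph `Γ_n` and of the complete graph `Γ_2`. -/
theorem banana_tubings (n : ℕ) (hn : 1 ≤ n) :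
    Nonempty ((banana n).Tubing ≃o ((complete n).Tubing × (complete 2).Tubing)) := by
  refine ⟨{
    toFun := fun T => (⟨Fmap1 T.1, isTubing_F1 hn T.2⟩, ⟨Fmap2 T.1, isTubing_F2 hn T.2⟩),
    invFun := fun P => ⟨Gmap P.1.1 P.2.1, isTubing_G hn P.1.2 P.2.2⟩,
    left_inv := fun T => Subtype.ext (GF hn T.2),
    right_inv := fun P => Prod.ext (Subtype.ext (FG1 hn P.1.2 P.2.2))
      (Subtype.ext (FG2 hn P.1.2 P.2.2)),
    map_rel_iff' := ?_ }⟩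
  intro a b
  erw [Equiv.coe_fn_mk, Prod.mk_le_mk]
  constructor
  · rintro ⟨h1, h2⟩
    show b.1 ⊆ a.1
    have := Gmap_mono h1 h2
    rwa [GF hn a.2, GF hn b.2] at this
  · intro h
    exact ⟨Fmap1_mono h, Fmap2_mono h⟩
end Pseudograph
end

section
/- Let G be a pseudograph and suppose tubes G_a and G_b are bundle compatible, adjacent or properly intersecting, with intersection a disjoint set of tubes {G_{∧_i}} and with G_∨ a minimal tube containing both. If |V(∨)| > max(|V(a)|,|V(b)|) then, with Λ(G_t) = c^{|V(t)|} + Σ_i c^{|E(i,t)|} + |G−G_t|² and c = |G|², one has Λ(G_a) + Λ(G_b) < Λ(G_∨) + Σ_i Λ(G_{∧_i}). -/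
namespace Pseudograph

variable {V E : Type}


/-- The number of nodes and edges of a piece. -/
noncomputable def pieceSize (H : Piece V E) : ℕ := H.verts.ncard + H.edges.ncard

/-- The constant `c = |G|²` of the realization, where `|G|` is the total number of
nodes and edges of `G`. -/
def cconst (G : Pseudograph V E) [Fintype V] [Fintype E] : ℤ :=
  ((Fintype.card V + Fintype.card E : ℕ) : ℤ) ^ 2

/-- `|G - G_t| = |G| - |G_t|`. -/
noncomputable def gap (G : Pseudograph V E) [Fintype V] [Fintype E] (H : Piece V E) : ℤ :=
  ((Fintype.card V + Fintype.card E : ℕ) : ℤ) - (pieceSize H : ℤ)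

/-- `Λ(G_t) = c^{|V(t)|} + Σ_i c^{|E(i,t)|} + |G - G_t|²`, the sum running over the
bundles of `G` (the unordered pairs attained by the endpoint map). -/
noncomputable def lam (G : Pseudograph V E) [Fintype V] [Fintype E] (H : Piece V E) : ℤ :=
  G.cconst ^ H.verts.ncard +
  (∑ᶠ p ∈ {p : Sym2 V | ∃ e, G.ends e = p},
    G.cconst ^ {e | e ∈ H.edges ∧ G.ends e = p}.ncard) +
  (G.gap H) ^ 2

/-- The sum of the values of `f` over the nodes and edges of a piece. -/
noncomputable def sumP (f : V ⊕ E → ℤ) (H : Piece V E) : ℤ :=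
  (∑ᶠ v ∈ H.verts, f (Sum.inl v)) + ∑ᶠ e ∈ H.edges, f (Sum.inr e)

/-- A maximal tubing. -/
def IsMaximalTubing (G : Pseudograph V E) (𝒯 : Set (Piece V E)) : Prop :=
  G.IsTubing 𝒯 ∧ ∀ 𝒯', G.IsTubing 𝒯' → 𝒯 ⊆ 𝒯' → 𝒯' = 𝒯

set_option maxHeartbeats 1000000 in
/-- The key inequality (Lemma `inequality`, dominance case): if tubes `G_a` and `G_b` are
bundle compatible and adjacent or properly intersecting, their intersection is the
disjoint set of tubes `I`, `G_∨` is a minimal tube containing both, and `|V(∨)|` strictly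
exceeds `|V(a)|` and `|V(b)|`, then `Λ(G_a) + Λ(G_b) < Λ(G_∨) + Σ_i Λ(G_{∧_i})`. -/
theorem lam_inequality {V E : Type} [Fintype V] [Fintype E] (G : Pseudograph V E)
    (hloop : ∀ e, ¬ (G.ends e).IsDiag)
    (a b vee : Piece V E) (I : Set (Piece V E))
    (ha : G.IsTube a) (hb : G.IsTube b)
    (hbc : ∀ p : Sym2 V, {e | e ∈ a.edges ∧ G.ends e = p} ⊆ b.edges ∨
      {e | e ∈ b.edges ∧ G.ends e = p} ⊆ a.edges)
    (hrel : ¬ a.Sub b ∧ ¬ b.Sub a ∧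
      ((a.verts ∩ b.verts).Nonempty ∨
        ∃ e, ∃ u ∈ a.verts, ∃ w ∈ b.verts, G.ends e = s(u, w)))
    (hI : (∀ t ∈ I, G.IsTube t) ∧
      (∀ t ∈ I, ∀ t' ∈ I, t ≠ t' → Disjoint t.verts t'.verts) ∧
      (⋃ t ∈ I, t.verts) = a.verts ∩ b.verts ∧
      (⋃ t ∈ I, t.edges) = a.edges ∩ b.edges ∧ I.Finite)
    (hvee : G.IsTube vee ∧ a.Sub vee ∧ b.Sub vee ∧
      ∀ t, G.IsTube t → a.Sub t → b.Sub t → t.Sub vee → t = vee)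
    (hcard : a.verts.ncard < vee.verts.ncard ∧ b.verts.ncard < vee.verts.ncard) :
    G.lam a + G.lam b < G.lam vee + ∑ᶠ t ∈ I, G.lam t := by
  classical
  obtain ⟨hIt, hIdisj, hIv, hIe, hIfin⟩ := hI
  obtain ⟨hveeT, hav, hbv, -⟩ := hvee
  set P : Set (Sym2 V) := {p : Sym2 V | ∃ e, G.ends e = p} with hPdef
  have hPfin : P.Finite := Set.toFinite _
  set PF := hPfin.toFinset with hPFdef
  set IF := hIfin.toFinset with hIFdef
  set N : ℤ := ((Fintype.card V + Fintype.card E : ℕ) : ℤ) with hNdef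
  have hcN : G.cconst = N ^ 2 := rfl
  -- basic cardinalities
  have haV : a.verts.Nonempty := ha.2.1.1
  have hbV : b.verts.Nonempty := hb.2.1.1
  have hna1 : 1 ≤ a.verts.ncard := (Set.ncard_pos (Set.toFinite _)).mpr haV
  have hn2 : 2 ≤ vee.verts.ncard := by have := hcard.1; omega
  have hV2 : 2 ≤ Fintype.card V := by
    have h := Set.ncard_le_ncard (Set.subset_univ vee.verts) (Set.toFinite _)
    rw [Set.ncard_univ, Nat.card_eq_fintype_card] at h
    omega
  have hN2 : (2 : ℤ) ≤ N := by
    rw [hNdef]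
    exact_mod_cast le_trans (by omega : 2 ≤ Fintype.card V + Fintype.card E) le_rfl
  have hc0 : (0 : ℤ) ≤ G.cconst := by rw [hcN]; positivity
  have hc1 : (1 : ℤ) ≤ G.cconst := by nlinarith [hcN, hN2]
  have hc4 : (4 : ℤ) ≤ G.cconst := by nlinarith [hcN, hN2]
  -- piece size bounds
  have hsize : ∀ H : Piece V E, (pieceSize H : ℤ) ≤ N := by
    intro H
    have h1 : H.verts.ncard ≤ Fintype.card V := by
      have h := Set.ncard_le_ncard (Set.subset_univ H.verts) (Set.toFinite _)
      rwa [Set.ncard_univ, Nat.card_eq_fintype_card] at h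
    have h2 : H.edges.ncard ≤ Fintype.card E := by
      have h := Set.ncard_le_ncard (Set.subset_univ H.edges) (Set.toFinite _)
      rwa [Set.ncard_univ, Nat.card_eq_fintype_card] at h
    rw [hNdef, pieceSize]
    push_cast
    omega
  have hgap : ∀ H : Piece V E, H.verts.Nonempty → 0 ≤ G.gap H ∧ G.gap H ≤ N - 1 := by
    intro H hH
    have h1 : 1 ≤ pieceSize H := by
      have : 1 ≤ H.verts.ncard := (Set.ncard_pos (Set.toFinite _)).mpr hH
      rw [pieceSize]; omega
    have h2 := hsize H
    have h1' : (1 : ℤ) ≤ (pieceSize H : ℤ) := by exact_mod_cast h1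
    constructor
    · rw [gap, ← hNdef]; linarith
    · rw [gap, ← hNdef]; linarith
  have hgapa := hgap a haV
  have hgapb := hgap b hbV
  have hgapa2 : (G.gap a) ^ 2 ≤ (N - 1) ^ 2 := pow_le_pow_left₀ hgapa.1 hgapa.2 2
  have hgapb2 : (G.gap b) ^ 2 ≤ (N - 1) ^ 2 := pow_le_pow_left₀ hgapb.1 hgapb.2 2
  -- bundle count bound
  have hPcard : (PF.card : ℤ) ≤ N := by
    have h1 : PF.card = P.ncard := (Set.ncard_eq_toFinset_card P hPfin).symm
    have h2 : P ⊆ Set.range G.ends := by rintro p ⟨e, he⟩; exact ⟨e, he⟩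
    have h3 : P.ncard ≤ (Set.range G.ends).ncard := Set.ncard_le_ncard h2 (Set.toFinite _)
    have h4 : (Set.range G.ends).ncard ≤ Fintype.card E := by
      rw [← Set.image_univ]
      have := Set.ncard_image_le (f := G.ends) (s := (Set.univ : Set E)) (Set.toFinite _)
      rwa [Set.ncard_univ, Nat.card_eq_fintype_card] at this
    rw [hNdef]
    have : PF.card ≤ Fintype.card V + Fintype.card E := by omega
    exact_mod_cast this
  -- the small-side bound
  have hsmall : ∀ (p : Sym2 V) (S : Set E),
      (∀ e ∈ S, e ∈ a.edges ∧ e ∈ b.edges ∧ G.ends e = p) →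
      G.cconst ^ S.ncard ≤
        (∑ t ∈ IF, G.cconst ^ {e | e ∈ t.edges ∧ G.ends e = p}.ncard) + 1 := by
    intro p S hS
    have hsumnn : 0 ≤ ∑ t ∈ IF, G.cconst ^ {e | e ∈ t.edges ∧ G.ends e = p}.ncard :=
      Finset.sum_nonneg fun t _ => pow_nonneg hc0 _
    rcases S.eq_empty_or_nonempty with rfl | ⟨e0, he0⟩
    · rw [Set.ncard_empty, pow_zero]; linarith
    · obtain ⟨hea0, heb0, hep0⟩ := hS e0 he0
      have he0U : e0 ∈ ⋃ t ∈ I, t.edges := by rw [hIe]; exact ⟨hea0, heb0⟩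
      obtain ⟨t0, ht0, he0t0⟩ := Set.mem_iUnion₂.mp he0U
      have hsub : S ⊆ {e | e ∈ t0.edges ∧ G.ends e = p} := by
        intro e' he'
        obtain ⟨hea, heb, hep⟩ := hS e' he'
        have he'U : e' ∈ ⋃ t ∈ I, t.edges := by rw [hIe]; exact ⟨hea, heb⟩
        obtain ⟨t1, ht1, he1⟩ := Set.mem_iUnion₂.mp he'U
        rcases eq_or_ne t1 t0 with rfl | hne
        · exact ⟨he1, hep⟩
        · exfalso
          obtain ⟨u, hu⟩ : ∃ u, u ∈ p := ⟨p.out.1, Sym2.out_fst_mem p⟩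
          have hu0 : u ∈ t0.verts := (hIt t0 ht0).1 e0 he0t0 u (by rw [hep0]; exact hu)
          have hu1 : u ∈ t1.verts := (hIt t1 ht1).1 e' he1 u (by rw [hep]; exact hu)
          exact Set.disjoint_left.mp (hIdisj t1 ht1 t0 ht0 hne) hu1 hu0
      have hle : S.ncard ≤ {e | e ∈ t0.edges ∧ G.ends e = p}.ncard :=
        Set.ncard_le_ncard hsub (Set.toFinite _)
      have step1 : G.cconst ^ S.ncard ≤ G.cconst ^ {e | e ∈ t0.edges ∧ G.ends e = p}.ncard :=
        pow_le_pow_right₀ hc1 hle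
      have ht0IF : t0 ∈ IF := hIfin.mem_toFinset.mpr ht0
      have step2 : G.cconst ^ {e | e ∈ t0.edges ∧ G.ends e = p}.ncard ≤
          ∑ t ∈ IF, G.cconst ^ {e | e ∈ t.edges ∧ G.ends e = p}.ncard :=
        Finset.single_le_sum (fun t _ => pow_nonneg hc0 _) ht0IF
      linarith
  -- per-bundle key inequality
  have key : ∀ p ∈ PF,
      G.cconst ^ {e | e ∈ a.edges ∧ G.ends e = p}.ncard +
        G.cconst ^ {e | e ∈ b.edges ∧ G.ends e = p}.ncard ≤
      G.cconst ^ {e | e ∈ vee.edges ∧ G.ends e = p}.ncard +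
        (∑ t ∈ IF, G.cconst ^ {e | e ∈ t.edges ∧ G.ends e = p}.ncard) + 1 := by
    intro p _
    rcases hbc p with h | h
    · have h1 := hsmall p {e | e ∈ a.edges ∧ G.ends e = p}
        (fun e he => ⟨he.1, h he, he.2⟩)
      have h2 : G.cconst ^ {e | e ∈ b.edges ∧ G.ends e = p}.ncard ≤
          G.cconst ^ {e | e ∈ vee.edges ∧ G.ends e = p}.ncard :=
        pow_le_pow_right₀ hc1 (Set.ncard_le_ncard
          (fun e he => ⟨hbv.2 he.1, he.2⟩) (Set.toFinite _))
      linarith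
    · have h1 := hsmall p {e | e ∈ b.edges ∧ G.ends e = p}
        (fun e he => ⟨h he, he.1, he.2⟩)
      have h2 : G.cconst ^ {e | e ∈ a.edges ∧ G.ends e = p}.ncard ≤
          G.cconst ^ {e | e ∈ vee.edges ∧ G.ends e = p}.ncard :=
        pow_le_pow_right₀ hc1 (Set.ncard_le_ncard
          (fun e he => ⟨hav.2 he.1, he.2⟩) (Set.toFinite _))
      linarith
  -- sum the key inequality over the bundles
  have h1' : (∑ p ∈ PF, G.cconst ^ {e | e ∈ a.edges ∧ G.ends e = p}.ncard) +
      (∑ p ∈ PF, G.cconst ^ {e | e ∈ b.edges ∧ G.ends e = p}.ncard) ≤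
      (∑ p ∈ PF, G.cconst ^ {e | e ∈ vee.edges ∧ G.ends e = p}.ncard) +
      (∑ p ∈ PF, ∑ t ∈ IF, G.cconst ^ {e | e ∈ t.edges ∧ G.ends e = p}.ncard) +
      (PF.card : ℤ) := by
    calc (∑ p ∈ PF, G.cconst ^ {e | e ∈ a.edges ∧ G.ends e = p}.ncard) +
        (∑ p ∈ PF, G.cconst ^ {e | e ∈ b.edges ∧ G.ends e = p}.ncard)
        = ∑ p ∈ PF, (G.cconst ^ {e | e ∈ a.edges ∧ G.ends e = p}.ncard +
            G.cconst ^ {e | e ∈ b.edges ∧ G.ends e = p}.ncard) :=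
          Finset.sum_add_distrib.symm
      _ ≤ ∑ p ∈ PF, (G.cconst ^ {e | e ∈ vee.edges ∧ G.ends e = p}.ncard +
            (∑ t ∈ IF, G.cconst ^ {e | e ∈ t.edges ∧ G.ends e = p}.ncard) + 1) :=
          Finset.sum_le_sum key
      _ = _ := by
          rw [Finset.sum_add_distrib, Finset.sum_add_distrib, Finset.sum_const,
            nsmul_eq_mul, mul_one]
  -- the inner double sum is at most the sum of the Λ values over I
  have hT : (∑ p ∈ PF, ∑ t ∈ IF, G.cconst ^ {e | e ∈ t.edges ∧ G.ends e = p}.ncard) ≤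
      ∑ t ∈ IF, G.lam t := by
    rw [Finset.sum_comm]
    refine Finset.sum_le_sum fun t _ => ?_
    rw [lam, finsum_mem_eq_finite_toFinset_sum _ hPfin]
    have h1 : (0 : ℤ) ≤ G.cconst ^ t.verts.ncard := pow_nonneg hc0 _
    have h2 : (0 : ℤ) ≤ (G.gap t) ^ 2 := sq_nonneg _
    linarith
  -- numeric bounds for the vertex powers
  have hca : G.cconst ^ a.verts.ncard ≤ G.cconst ^ (vee.verts.ncard - 1) :=
    pow_le_pow_right₀ hc1 (by omega)
  have hcb : G.cconst ^ b.verts.ncard ≤ G.cconst ^ (vee.verts.ncard - 1) :=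
    pow_le_pow_right₀ hc1 (by have := hcard.2; omega)
  have hbig : G.cconst ^ (vee.verts.ncard - 1) + G.cconst ^ (vee.verts.ncard - 1) +
      ((N - 1) ^ 2 + (N - 1) ^ 2) + N < G.cconst ^ vee.verts.ncard := by
    have hsplit : G.cconst ^ vee.verts.ncard = G.cconst ^ (vee.verts.ncard - 1) * G.cconst := by
      rw [← pow_succ]; congr 1; omega
    have hpow_ge : G.cconst ≤ G.cconst ^ (vee.verts.ncard - 1) := by
      calc G.cconst = G.cconst ^ 1 := (pow_one _).symm
        _ ≤ _ := pow_le_pow_right₀ hc1 (by omega)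
    have h0 : (0 : ℤ) ≤ G.cconst ^ (vee.verts.ncard - 1) := pow_nonneg hc0 _
    have h4 : G.cconst ^ (vee.verts.ncard - 1) * 4 ≤
        G.cconst ^ (vee.verts.ncard - 1) * G.cconst := by
      exact mul_le_mul_of_nonneg_left hc4 h0
    nlinarith [hcN, hN2, hpow_ge]
  -- rewrite the goal and conclude
  rw [lam, lam, lam, finsum_mem_eq_finite_toFinset_sum _ hPfin,
    finsum_mem_eq_finite_toFinset_sum _ hPfin, finsum_mem_eq_finite_toFinset_sum _ hPfin,
    finsum_mem_eq_finite_toFinset_sum _ hIfin]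
  have hgv : (0 : ℤ) ≤ (G.gap vee) ^ 2 := sq_nonneg _
  linarith [h1', hT, hPcard, hca, hcb, hgapa2, hgapb2, hgv, hbig]

end Pseudograph
end
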